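/- Let f : ℕ → ℕ. Suppose that for every domain X' and every binary concept class H ⊆ {0,1}^{X'} with finite VC dimension d, there exists an exact realizable sample compression scheme for H of size at most f(d). Then for every multiclass concept class C ⊆ Y^X with finite label set Y (|Y| ≥ 2) and finite graph dimension d_G, there exists an exact realizable sample compression scheme for C of size at most f(d_G)·(1 + ⌈log₂ |Y|⌉). -/

import Mathlib

universe u v

/-- A finite sample `S` is realizable by the concept class `C`. -/
def Realizable {X Y : Type*} (C : Set (X → Y)) (S : List (X × Y)) : Prop :=
  ∃ c ∈ C, ∀ p ∈ S, c p.1 = p.2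

/-- `(κ, ρ)` is an exact realizable sample compression scheme for `C` of size at most `k`:
`κ` outputs a subsequence of `S` together with a bitstring, of total length at most `k`
on realizable samples, and `ρ` reconstructs a sample-consistent predictor. -/
def IsExactRealizableScheme {X Y : Type*} (C : Set (X → Y)) (k : ℕ)
    (κ : List (X × Y) → List (X × Y) × List Bool)
    (ρ : List (X × Y) × List Bool → X → Y) : Prop :=
  (∀ S : List (X × Y), (κ S).1 ⊆ S) ∧
  (∀ S : List (X × Y), Realizable C S → (κ S).1.length + (κ S).2.length ≤ k) ∧
  (∀ S : List (X × Y), Realizable C S → ∀ p ∈ S, ρ (κ S) p.1 = p.2)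

/-- `n` points of `X` are shattered by the binary concept class `H ⊆ {0,1}^X`. -/
def ShattersN {X : Type*} (H : Set (X → Bool)) (n : ℕ) : Prop :=
  ∃ x : Fin n → X, ∀ b : Fin n → Bool, ∃ h ∈ H, ∀ i, h (x i) = b i

/-- `H` has (finite) VC dimension exactly `d`. -/
def IsVCDim {X : Type*} (H : Set (X → Bool)) (d : ℕ) : Prop :=
  ShattersN H d ∧ ¬ ShattersN H (d + 1)

/-- `n` points of `X` are G-shattered by the multiclass concept class `C ⊆ Y^X`. -/
def GShattersN {X Y : Type*} (C : Set (X → Y)) (n : ℕ) : Prop :=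
  ∃ (x : Fin n → X) (y : Fin n → Y),
    ∀ b : Fin n → Bool, ∃ c ∈ C, ∀ i, (c (x i) = y i ↔ b i = true)

/-- `C` has (finite) graph dimension exactly `d`. -/
def IsGraphDim {X Y : Type*} (C : Set (X → Y)) (d : ℕ) : Prop :=
  GShattersN C d ∧ ¬ GShattersN C (d + 1)

namespace MCCAux

noncomputable def bdecide (p : Prop) : Bool := @decide p (Classical.propDecidable p)

@[simp] lemma bdecide_iff (p : Prop) : bdecide p = true ↔ p := by
  simp [bdecide]

lemma bdecide_eq_iff (p : Prop) (b : Bool) : bdecide p = b ↔ (p ↔ b = true) := by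
  cases b <;> simp [bdecide]

lemma bdecide_congr {p q : Prop} (h : p ↔ q) : bdecide p = bdecide q := by
  unfold bdecide; exact decide_eq_decide.mpr h

@[simp] lemma bdecide_self {α : Type*} (a : α) : bdecide (a = a) = true := by simp

variable {X : Type u} {Y : Type v}

/-- The graph class of a multiclass concept class. -/
def graphClass (C : Set (X → Y)) : Set (X × Y → Bool) :=
  (fun c (q : X × Y) => bdecide (c q.1 = q.2)) '' C

lemma shattersN_graphClass (C : Set (X → Y)) (n : ℕ) :
    ShattersN (graphClass C) n ↔ GShattersN C n := by
  constructor
  · rintro ⟨z, hz⟩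
    refine ⟨fun i => (z i).1, fun i => (z i).2, fun b => ?_⟩
    obtain ⟨h, ⟨c, hc, rfl⟩, hhb⟩ := hz b
    exact ⟨c, hc, fun i => (bdecide_eq_iff _ _).mp (hhb i)⟩
  · rintro ⟨x, y, hxy⟩
    refine ⟨fun i => (x i, y i), fun b => ?_⟩
    obtain ⟨c, hc, hcb⟩ := hxy b
    exact ⟨_, ⟨c, hc, rfl⟩, fun i => (bdecide_eq_iff _ _).mpr (hcb i)⟩

/-- Augmented binary sample: all pairs (xᵢ, y), labeled by whether y = yᵢ. -/
noncomputable def augment [Fintype Y] (S : List (X × Y)) : List ((X × Y) × Bool) :=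
  S.flatMap fun p => Finset.univ.toList.map fun y => ((p.1, y), bdecide (y = p.2))

lemma mem_augment [Fintype Y] {S : List (X × Y)} {t : (X × Y) × Bool}
    (ht : t ∈ augment S) : ∃ p ∈ S, ∃ y : Y, t = ((p.1, y), bdecide (y = p.2)) := by
  simp only [augment, List.mem_flatMap, List.mem_map] at ht
  obtain ⟨p, hp, y, _, rfl⟩ := ht
  exact ⟨p, hp, y, rfl⟩

lemma mem_augment_of [Fintype Y] {S : List (X × Y)} {p : X × Y} (hp : p ∈ S) (y : Y) :
    ((p.1, y), bdecide (y = p.2)) ∈ augment S := by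
  simp only [augment, List.mem_flatMap, List.mem_map]
  exact ⟨p, hp, y, by simp, rfl⟩

/-- The label attached to `x` in the sample `S` (first occurrence), or `y₀`. -/
noncomputable def labelOf (y₀ : Y) (S : List (X × Y)) (x : X) : Y :=
  ((S.find? fun p => bdecide (p.1 = x)).map Prod.snd).getD y₀

lemma labelOf_mem {y₀ : Y} {S : List (X × Y)} {x : X} (h : ∃ p ∈ S, p.1 = x) :
    (x, labelOf y₀ S x) ∈ S := by
  obtain ⟨p, hp, hpx⟩ := h
  have hsome : (S.find? fun p => bdecide (p.1 = x)).isSome = true := by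
    rw [List.find?_isSome]; exact ⟨p, hp, by simp [hpx]⟩
  obtain ⟨q, hq⟩ := Option.isSome_iff_exists.mp hsome
  have hq1 : q.1 = x := by simpa using List.find?_some hq
  have hqS : q ∈ S := List.mem_of_find?_eq_some hq
  have : labelOf y₀ S x = q.2 := by simp [labelOf, hq]
  rw [this, ← hq1]; exact hqS

/-- Decode the stored list: each stored sample point, together with `L` bits
describing a label, reconstructs one binary sample point. -/
noncomputable def decodeList (L : ℕ) (dec : List Bool → Y) :
    List (X × Y) → List Bool → List ((X × Y) × Bool)
  | [], _ => []
  | p :: ps, bs =>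
      ((p.1, dec (bs.take L)), bdecide (dec (bs.take L) = p.2)) ::
        decodeList L dec ps (bs.drop L)

lemma decodeList_correct (L : ℕ) (enc : Y → List Bool) (dec : List Bool → Y)
    (hlen : ∀ y, (enc y).length = L) (hdec : ∀ y, dec (enc y) = y)
    (g : (X × Y) × Bool → X × Y) :
    ∀ (T : List ((X × Y) × Bool)) (bs : List Bool),
      (∀ t ∈ T, (g t).1 = t.1.1 ∧ t.2 = bdecide (t.1.2 = (g t).2)) →
      decodeList L dec (T.map g) ((T.flatMap fun t => enc t.1.2) ++ bs) = T
  | [], bs, _ => rfl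
  | t :: T, bs, h => by
    have h1 := (h t (by simp)).1
    have h2 := (h t (by simp)).2
    simp only [List.map_cons, List.flatMap_cons, decodeList, List.append_assoc]
    rw [List.take_left' (hlen t.1.2), List.drop_left' (hlen t.1.2), hdec]
    rw [decodeList_correct L enc dec hlen hdec g T bs (fun t ht => h t (by simp [ht]))]
    rw [h1, ← h2]

lemma flatMap_enc_length (L : ℕ) (enc : Y → List Bool) (hlen : ∀ y, (enc y).length = L)
    (T : List ((X × Y) × Bool)) :
    (T.flatMap fun t => enc t.1.2).length = T.length * L := by
  rw [List.length_flatMap]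
  induction T with
  | nil => simp
  | cons t T ih => simp [ih, hlen, Nat.succ_mul, Nat.add_comm]

/-- The multiclass compressor built from a binary compressor `κ₀`. -/
noncomputable def mcκ [Fintype Y] (enc : Y → List Bool) (y₀ : Y)
    (κ₀ : List ((X × Y) × Bool) → List ((X × Y) × Bool) × List Bool)
    (S : List (X × Y)) : List (X × Y) × List Bool :=
  ((κ₀ (augment S)).1.map fun t => (t.1.1, labelOf y₀ S t.1.1),
    ((κ₀ (augment S)).1.flatMap fun t => enc t.1.2) ++ (κ₀ (augment S)).2)

/-- The multiclass reconstructor built from a binary reconstructor `ρ₀`. -/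
noncomputable def mcρ [Fintype Y] (L : ℕ) (dec : List Bool → Y) (y₀ : Y)
    (ρ₀ : List ((X × Y) × Bool) × List Bool → X × Y → Bool)
    (pair : List (X × Y) × List Bool) : X → Y :=
  fun x =>
    let h := ρ₀ (decodeList L dec pair.1 pair.2, pair.2.drop (pair.1.length * L))
    if hy : ∃ y : Y, h (x, y) = true then hy.choose else y₀

/-- Binary encoding of labels. -/
noncomputable def encY [Fintype Y] (y : Y) : List Bool :=
  (List.range (Nat.clog 2 (Fintype.card Y))).map fun j => (Fintype.equivFin Y y : ℕ).testBit j

lemma encY_length [Fintype Y] (y : Y) :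
    (encY y).length = Nat.clog 2 (Fintype.card Y) := by simp [encY]

lemma encY_inj [Fintype Y] : Function.Injective (encY (Y := Y)) := by
  intro y₁ y₂ h
  set L := Nat.clog 2 (Fintype.card Y)
  have hlt : ∀ y : Y, ((Fintype.equivFin Y y : ℕ)) < 2 ^ L := fun y =>
    lt_of_lt_of_le (Fintype.equivFin Y y).2 (Nat.le_pow_clog one_lt_two _)
  have hbit : ∀ i, (Fintype.equivFin Y y₁ : ℕ).testBit i = (Fintype.equivFin Y y₂ : ℕ).testBit i := by
    intro i
    rcases lt_or_ge i L with hi | hi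
    · have := congrArg (fun l : List Bool => l[i]?) h
      simpa [encY, L, hi] using this
    · rw [Nat.testBit_lt_two_pow, Nat.testBit_lt_two_pow]
      · exact lt_of_lt_of_le (hlt y₂) (Nat.pow_le_pow_right (by norm_num) hi)
      · exact lt_of_lt_of_le (hlt y₁) (Nat.pow_le_pow_right (by norm_num) hi)
  have := Nat.eq_of_testBit_eq hbit
  have : Fintype.equivFin Y y₁ = Fintype.equivFin Y y₂ := Fin.ext this
  exact (Fintype.equivFin Y).injective this

noncomputable def decY [Fintype Y] (y₀ : Y) (bs : List Bool) : Y :=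
  if h : ∃ y : Y, encY y = bs then h.choose else y₀

lemma decY_encY [Fintype Y] (y₀ : Y) (y : Y) : decY y₀ (encY y) = y := by
  have h : ∃ y' : Y, encY y' = encY y := ⟨y, rfl⟩
  rw [decY, dif_pos h]
  exact encY_inj h.choose_spec

end MCCAux

open MCCAux in
/-- Reducing multiclass compression to binary compression: if every binary class of
finite VC dimension `d` has an exact realizable compression scheme of size at most `f d`,
then every multiclass class with finite label set `Y` (`|Y| ≥ 2`) and finite graph
dimension `d_G` has an exact realizable compression scheme of size at most
`f d_G * (1 + ⌈log₂ |Y|⌉)`. -/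
theorem multiclass_compression_of_binary {X : Type u} {Y : Type v} [Fintype Y]
    (hY : 2 ≤ Fintype.card Y) (f : ℕ → ℕ)
    (hbin : ∀ (X' : Type (max u v)) (H : Set (X' → Bool)) (d : ℕ), IsVCDim H d →
      ∃ κ ρ, IsExactRealizableScheme H (f d) κ ρ)
    (C : Set (X → Y)) (dG : ℕ) (hC : IsGraphDim C dG) :
    ∃ κ ρ, IsExactRealizableScheme C (f dG * (1 + Nat.clog 2 (Fintype.card Y))) κ ρ := by

  have hNY : Nonempty Y := Fintype.card_pos_iff.mp (by omega)
  obtain ⟨y₀⟩ := hNY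
  set L := Nat.clog 2 (Fintype.card Y) with hL
  -- the graph class has VC dimension dG
  have hVC : IsVCDim (graphClass C) dG := by
    constructor
    · exact (shattersN_graphClass C dG).mpr hC.1
    · intro h; exact hC.2 ((shattersN_graphClass C (dG + 1)).mp h)
  obtain ⟨κ₀, ρ₀, hsub₀, hsize₀, hcons₀⟩ := hbin (X × Y) (graphClass C) dG hVC
  refine ⟨mcκ encY y₀ κ₀, mcρ L (decY y₀) y₀ ρ₀, ?_, ?_, ?_⟩
  · -- subset property
    intro S q hq
    simp only [mcκ, List.mem_map] at hq
    obtain ⟨t, ht, rfl⟩ := hq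
    have ht' : t ∈ augment S := hsub₀ (augment S) ht
    obtain ⟨p, hp, y, rfl⟩ := mem_augment ht'
    exact labelOf_mem ⟨p, hp, rfl⟩
  · -- size and consistency need realizability of augment S; prepare it
    intro S hS
    obtain ⟨c, hc, hcS⟩ := hS
    have hre : Realizable (graphClass C) (augment S) := by
      refine ⟨fun q => bdecide (c q.1 = q.2), ⟨c, hc, rfl⟩, fun t ht => ?_⟩
      obtain ⟨p, hp, y, rfl⟩ := mem_augment ht
      exact bdecide_congr (by rw [hcS p hp]; exact eq_comm)
    have hsize := hsize₀ (augment S) hre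
    simp only [mcκ, List.length_map, List.length_append,
      flatMap_enc_length L encY encY_length]
    nlinarith [hsize]
  · -- consistency
    intro S hS p hp
    obtain ⟨c, hc, hcS⟩ := hS
    have hre : Realizable (graphClass C) (augment S) := by
      refine ⟨fun q => bdecide (c q.1 = q.2), ⟨c, hc, rfl⟩, fun t ht => ?_⟩
      obtain ⟨p, hp, y, rfl⟩ := mem_augment ht
      exact bdecide_congr (by rw [hcS p hp]; exact eq_comm)
    set T := (κ₀ (augment S)).1 with hT
    set g : (X × Y) × Bool → X × Y := fun t => (t.1.1, labelOf y₀ S t.1.1) with hg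
    -- decoding recovers T
    have hgood : ∀ t ∈ T, (g t).1 = t.1.1 ∧ t.2 = bdecide (t.1.2 = (g t).2) := by
      intro t ht
      have ht' : t ∈ augment S := hsub₀ (augment S) ht
      obtain ⟨q, hq, y, rfl⟩ := mem_augment ht'
      refine ⟨rfl, ?_⟩
      have hmem : (q.1, labelOf y₀ S q.1) ∈ S := labelOf_mem ⟨q, hq, rfl⟩
      have : labelOf y₀ S q.1 = q.2 := by
        have h1 := hcS _ hmem
        have h2 := hcS _ hq
        simp only at h1
        rw [← h1, h2]
      simp [g, this]
    have hdecode : decodeList L (decY y₀) (T.map g)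
        ((T.flatMap fun t => encY t.1.2) ++ (κ₀ (augment S)).2) = T :=
      decodeList_correct L encY (decY y₀) encY_length (decY_encY y₀) g T _ hgood
    have hdrop : (((T.flatMap fun t => encY t.1.2) ++ (κ₀ (augment S)).2)).drop
        ((T.map g).length * L) = (κ₀ (augment S)).2 := by
      apply List.drop_left'
      rw [flatMap_enc_length L encY encY_length, List.length_map]
    -- the reconstructed binary hypothesis
    have hrec : ∀ y : Y, ρ₀ (κ₀ (augment S)) (p.1, y) = bdecide (y = p.2) := by
      intro y
      exact hcons₀ (augment S) hre ((p.1, y), bdecide (y = p.2)) (mem_augment_of hp y)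
    show mcρ L (decY y₀) y₀ ρ₀ (mcκ encY y₀ κ₀ S) p.1 = p.2
    simp only [mcρ, mcκ, ← hT, ← hg, hdecode, hdrop]
    change (if h : ∃ y : Y, ρ₀ (κ₀ (augment S)) (p.1, y) = true then h.choose else y₀) = p.2
    have hex : ∃ y : Y, ρ₀ (κ₀ (augment S)) (p.1, y) = true := ⟨p.2, by simp [hrec]⟩
    rw [dif_pos hex]
    have := hex.choose_spec
    rw [hrec] at this
    simpa using this
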